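/- Let F be a set of real-valued functions on Ω, let x_1, …, x_N ∈ Ω be fixed points at which the relevant suprema are finite, and let f : Ω → ℝ satisfy |f(x_i)| ≤ B for i = 1, …, N. Define f·F = {x ↦ f(x)h(x) : h ∈ F}. Then the empirical Rademacher complexity satisfies R̂_N(f·F; x_1,…,x_N) ≤ B · R̂_N(F; x_1,…,x_N). -/

import Mathlib

open Set Pointwise

noncomputable section

/-- The empirical Rademacher complexity
`R̂_N(F; x) = 2^{−N} ∑_{ξ ∈ {−1,1}^N} sup_{h∈F} (1/N) ∑_i ξ_i h(x_i)`. -/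
def empRad {Ω : Type*} (N : ℕ) (F : Set (Ω → ℝ)) (x : Fin N → Ω) : ℝ :=
  (2 ^ N : ℝ)⁻¹ * ∑ ξ : Fin N → Bool,
    sSup ((fun h : Ω → ℝ =>
      (N : ℝ)⁻¹ * ∑ i, (if ξ i then (1 : ℝ) else -1) * h (x i)) '' F)

namespace EmpRadAux

variable {Ω : Type*}

/-- Inner quantity with coefficient vector `c`. -/
def G1 (N : ℕ) (F : Set (Ω → ℝ)) (x : Fin N → Ω) (c : Fin N → ℝ) (ξ : Fin N → Bool) : ℝ :=
  sSup ((fun h : Ω → ℝ =>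
    (N : ℝ)⁻¹ * ∑ i, (if ξ i then (1 : ℝ) else -1) * (c i * h (x i))) '' F)

lemma exists_K {N : ℕ} {F : Set (Ω → ℝ)} {x : Fin N → Ω} (hN : N ≠ 0)
    (hbddF : ∀ ξ : Fin N → Bool, BddAbove ((fun h : Ω → ℝ =>
      (N : ℝ)⁻¹ * ∑ i, (if ξ i then (1 : ℝ) else -1) * h (x i)) '' F)) :
    ∃ K : ℝ, ∀ h ∈ F, ∀ i, |h (x i)| ≤ K := by
  have hM : ∀ ξ : Fin N → Bool, ∃ M : ℝ, ∀ h ∈ F,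
      (N : ℝ)⁻¹ * ∑ i, (if ξ i then (1 : ℝ) else -1) * h (x i) ≤ M := by
    intro ξ
    obtain ⟨M, hMub⟩ := hbddF ξ
    exact ⟨M, fun h hh => hMub ⟨h, hh, rfl⟩⟩
  choose M hMspec using hM
  refine ⟨(N : ℝ) * Finset.univ.sup' (Finset.univ_nonempty) M, ?_⟩
  intro h hh i
  set ξ : Fin N → Bool := fun j => decide (0 ≤ h (x j)) with hξ
  have habs : ∀ j, (if ξ j then (1:ℝ) else -1) * h (x j) = |h (x j)| := by
    intro j
    simp only [hξ]
    by_cases hj : 0 ≤ h (x j)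
    · simp [hj, abs_of_nonneg hj]
    · simp [hj, abs_of_neg (lt_of_not_ge hj)]
  have h1 : |h (x i)| ≤ ∑ j, |h (x j)| :=
    Finset.single_le_sum (f := fun j => |h (x j)|) (fun j _ => abs_nonneg _) (Finset.mem_univ i)
  have h2 : ∑ j, |h (x j)| = (N : ℝ) * ((N : ℝ)⁻¹ * ∑ j, (if ξ j then (1:ℝ) else -1) * h (x j)) := by
    rw [← mul_assoc, mul_inv_cancel₀ (by exact_mod_cast hN), one_mul]
    exact Finset.sum_congr rfl fun j _ => (habs j).symm
  calc |h (x i)| ≤ ∑ j, |h (x j)| := h1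
    _ = (N : ℝ) * ((N : ℝ)⁻¹ * ∑ j, (if ξ j then (1:ℝ) else -1) * h (x j)) := h2
    _ ≤ (N : ℝ) * Finset.univ.sup' Finset.univ_nonempty M := by
        apply mul_le_mul_of_nonneg_left _ (Nat.cast_nonneg N)
        exact le_trans (hMspec ξ h hh) (Finset.le_sup' M (Finset.mem_univ ξ))

/-- Key two-point inequality. -/
lemma key {α : Type*} (S : Set α) (hS : S.Nonempty) (u v : α → ℝ) (t B : ℝ) (ht : |t| ≤ B)
    (h1 : BddAbove ((fun a => B * u a + v a) '' S))
    (h2 : BddAbove ((fun a => -B * u a + v a) '' S)) :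
    sSup ((fun a => t * u a + v a) '' S) + sSup ((fun a => -t * u a + v a) '' S) ≤
      sSup ((fun a => B * u a + v a) '' S) + sSup ((fun a => -B * u a + v a) '' S) := by
  have hkey : ∀ a ∈ S, ∀ b ∈ S, (t * u a + v a) + (-t * u b + v b) ≤
      sSup ((fun a => B * u a + v a) '' S) + sSup ((fun a => -B * u a + v a) '' S) := by
    intro a ha b hb
    rcases le_total (u b) (u a) with hu | hu
    · have : (t * u a + v a) + (-t * u b + v b) ≤ (B * u a + v a) + (-B * u b + v b) := by
        have : t * (u a - u b) ≤ B * (u a - u b) := by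
          calc t * (u a - u b) ≤ |t| * (u a - u b) :=
                mul_le_mul_of_nonneg_right (le_abs_self t) (by linarith)
            _ ≤ B * (u a - u b) := mul_le_mul_of_nonneg_right ht (by linarith)
        nlinarith
      refine le_trans this (add_le_add ?_ ?_)
      · exact le_csSup h1 ⟨a, ha, rfl⟩
      · exact le_csSup h2 ⟨b, hb, rfl⟩
    · have : (t * u a + v a) + (-t * u b + v b) ≤ (-B * u a + v a) + (B * u b + v b) := by
        have : t * (u a - u b) ≤ B * (u b - u a) := by
          calc t * (u a - u b) ≤ |t| * (u b - u a) := by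
                have := neg_abs_le t
                nlinarith [abs_nonneg t]
            _ ≤ B * (u b - u a) := mul_le_mul_of_nonneg_right ht (by linarith)
        nlinarith
      refine le_trans this ?_
      rw [add_comm (sSup _)]
      refine add_le_add ?_ ?_
      · exact le_csSup h2 ⟨a, ha, rfl⟩
      · exact le_csSup h1 ⟨b, hb, rfl⟩
  have hne1 : ((fun a => -t * u a + v a) '' S).Nonempty := hS.image _
  refine add_le_of_le_sub_right (csSup_le (hS.image _) ?_)
  rintro _ ⟨a, ha, rfl⟩
  refine le_sub_right_of_add_le ?_
  refine add_le_of_le_sub_left (csSup_le hne1 ?_)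
  rintro _ ⟨b, hb, rfl⟩
  dsimp only
  have := hkey a ha b hb
  linarith

lemma split_fun (N : ℕ) (x : Fin N → Ω) (c : Fin N → ℝ) (ξ : Fin N → Bool) (j : Fin N) :
    (fun h : Ω → ℝ => (N : ℝ)⁻¹ * ∑ i, (if ξ i then (1 : ℝ) else -1) * (c i * h (x i)))
    = fun h : Ω → ℝ => ((if ξ j then (1 : ℝ) else -1) * c j) * ((N : ℝ)⁻¹ * h (x j))
        + (N : ℝ)⁻¹ * ∑ i ∈ Finset.univ.erase j,
            (if ξ i then (1 : ℝ) else -1) * (c i * h (x i)) := by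
  funext h
  rw [← Finset.add_sum_erase _ _ (Finset.mem_univ j)]
  ring

lemma step (N : ℕ) (F : Set (Ω → ℝ)) (x : Fin N → Ω) (hF : F.Nonempty) {K : ℝ}
    (hK : ∀ h ∈ F, ∀ i, |h (x i)| ≤ K)
    (c : Fin N → ℝ) (j : Fin N) (B : ℝ) (hcj : |c j| ≤ B) :
    ∑ ξ : Fin N → Bool, G1 N F x c ξ ≤
      ∑ ξ : Fin N → Bool, G1 N F x (Function.update c j B) ξ := by
  have bdd_all : ∀ (c' : Fin N → ℝ) (ξ : Fin N → Bool),
      BddAbove ((fun h : Ω → ℝ =>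
        (N : ℝ)⁻¹ * ∑ i, (if ξ i then (1 : ℝ) else -1) * (c' i * h (x i))) '' F) := by
    intro c' ξ
    refine ⟨(N : ℝ)⁻¹ * ∑ i, |c' i| * K, ?_⟩
    rintro _ ⟨h, hh, rfl⟩
    refine mul_le_mul_of_nonneg_left (Finset.sum_le_sum fun i _ => ?_) (by positivity)
    calc (if ξ i then (1:ℝ) else -1) * (c' i * h (x i))
        ≤ |(if ξ i then (1:ℝ) else -1) * (c' i * h (x i))| := le_abs_self _
      _ = |c' i| * |h (x i)| := by rw [abs_mul, abs_mul]; split <;> simp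
      _ ≤ |c' i| * K := mul_le_mul_of_nonneg_left (hK h hh i) (abs_nonneg _)
  set c' := Function.update c j B with hc'
  have hinv : Function.Involutive (fun ξ : Fin N → Bool => Function.update ξ j (!ξ j)) := by
    intro ξ
    simp [Function.update_idem, Function.update_self]
  set σ : Equiv.Perm (Fin N → Bool) := Function.Involutive.toPerm _ hinv with hσ
  have point : ∀ ξ : Fin N → Bool,
      G1 N F x c ξ + G1 N F x c (σ ξ) ≤ G1 N F x c' ξ + G1 N F x c' (σ ξ) := by
    intro ξ
    set u : (Ω → ℝ) → ℝ := fun h => (N : ℝ)⁻¹ * h (x j) with hu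
    set v : (Ω → ℝ) → ℝ := fun h =>
      (N : ℝ)⁻¹ * ∑ i ∈ Finset.univ.erase j,
        (if ξ i then (1 : ℝ) else -1) * (c i * h (x i)) with hv
    have hσξ : ∀ i, i ≠ j → (σ ξ) i = ξ i := by
      intro i hij
      simp only [hσ, Function.Involutive.toPerm, Equiv.coe_fn_mk]
      exact Function.update_of_ne hij _ _
    have hσξj : (σ ξ) j = !ξ j := by
      simp only [hσ, Function.Involutive.toPerm, Equiv.coe_fn_mk]
      exact Function.update_self _ _ _
    have hc'i : ∀ i, i ≠ j → c' i = c i := fun i hij => Function.update_of_ne hij _ _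
    have hc'j : c' j = B := Function.update_self _ _ _
    have htail : ∀ (ξ'' : Fin N → Bool) (c'' : Fin N → ℝ), (∀ i, i ≠ j → ξ'' i = ξ i) →
        (∀ i, i ≠ j → c'' i = c i) →
        ∀ h : Ω → ℝ, (N : ℝ)⁻¹ * ∑ i ∈ Finset.univ.erase j,
          (if ξ'' i then (1 : ℝ) else -1) * (c'' i * h (x i)) = v h := by
      intro ξ'' c'' hξ'' hc'' h
      simp only [hv]
      congr 1
      refine Finset.sum_congr rfl fun i hi => ?_
      have hij : i ≠ j := Finset.ne_of_mem_erase hi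
      rw [hξ'' i hij, hc'' i hij]
    set t : ℝ := (if ξ j then (1:ℝ) else -1) * c j with htdef
    set tB : ℝ := (if ξ j then (1:ℝ) else -1) * B with htBdef
    have f1 : (fun h : Ω → ℝ =>
        (N : ℝ)⁻¹ * ∑ i, (if ξ i then (1 : ℝ) else -1) * (c i * h (x i)))
        = fun h => t * u h + v h := split_fun N x c ξ j
    have f2 : (fun h : Ω → ℝ =>
        (N : ℝ)⁻¹ * ∑ i, (if (σ ξ) i then (1 : ℝ) else -1) * (c i * h (x i)))
        = fun h => -t * u h + v h := by
      rw [split_fun N x c (σ ξ) j]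
      funext h
      rw [htail (σ ξ) c hσξ (fun _ _ => rfl) h, hσξj, htdef]
      cases hb : ξ j <;> simp [hu] <;> ring
    have f3 : (fun h : Ω → ℝ =>
        (N : ℝ)⁻¹ * ∑ i, (if ξ i then (1 : ℝ) else -1) * (c' i * h (x i)))
        = fun h => tB * u h + v h := by
      rw [split_fun N x c' ξ j]
      funext h
      rw [htail ξ c' (fun _ _ => rfl) hc'i h, hc'j]
    have f4 : (fun h : Ω → ℝ =>
        (N : ℝ)⁻¹ * ∑ i, (if (σ ξ) i then (1 : ℝ) else -1) * (c' i * h (x i)))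
        = fun h => -tB * u h + v h := by
      rw [split_fun N x c' (σ ξ) j]
      funext h
      rw [htail (σ ξ) c' hσξ hc'i h, hσξj, hc'j, htBdef]
      cases hb : ξ j <;> simp [hu] <;> ring
    have g1 : G1 N F x c ξ = sSup ((fun h => t * u h + v h) '' F) := by
      unfold G1; rw [f1]
    have g2 : G1 N F x c (σ ξ) = sSup ((fun h => -t * u h + v h) '' F) := by
      unfold G1; rw [f2]
    have g3 : G1 N F x c' ξ = sSup ((fun h => tB * u h + v h) '' F) := by
      unfold G1; rw [f3]
    have g4 : G1 N F x c' (σ ξ) = sSup ((fun h => -tB * u h + v h) '' F) := by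
      unfold G1; rw [f4]
    have b3 : BddAbove ((fun h => tB * u h + v h) '' F) := by
      rw [← f3]; exact bdd_all c' ξ
    have b4 : BddAbove ((fun h => -tB * u h + v h) '' F) := by
      rw [← f4]; exact bdd_all c' (σ ξ)
    rw [g1, g2, g3, g4]
    cases hb : ξ j
    · have htB : tB = -B := by simp [htBdef, hb]
      have ht' : |(-t)| ≤ B := by
        rw [abs_neg, htdef, hb]
        simpa using hcj
      have r1 : (fun h : Ω → ℝ => tB * u h + v h) = fun h => -B * u h + v h := by
        funext h; rw [htB]
      have r2 : (fun h : Ω → ℝ => -tB * u h + v h) = fun h => B * u h + v h := by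
        funext h; rw [htB]; ring_nf
      have b3' : BddAbove ((fun a : Ω → ℝ => B * u a + v a) '' F) := by
        rw [← r2]; exact b4
      have b4' : BddAbove ((fun a : Ω → ℝ => -B * u a + v a) '' F) := by
        rw [← r1]; exact b3
      have key' := key F hF u v (-t) B ht' b3' b4'
      have e5 : (fun h : Ω → ℝ => - -t * u h + v h) = fun h => t * u h + v h := by
        funext h; ring_nf
      rw [e5] at key'
      rw [r1, r2]
      linarith
    · have htB : tB = B := by simp [htBdef, hb]
      have ht' : |t| ≤ B := by rw [htdef, hb]; simpa using hcj
      have r1 : (fun h : Ω → ℝ => tB * u h + v h) = fun h => B * u h + v h := by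
        funext h; rw [htB]
      have r2 : (fun h : Ω → ℝ => -tB * u h + v h) = fun h => -B * u h + v h := by
        funext h; rw [htB]
      have b3' : BddAbove ((fun a : Ω → ℝ => B * u a + v a) '' F) := by
        rw [← r1]; exact b3
      have b4' : BddAbove ((fun a : Ω → ℝ => -B * u a + v a) '' F) := by
        rw [← r2]; exact b4
      rw [r1, r2]
      exact key F hF u v t B ht' b3' b4'
  have hsum : ∀ c'' : Fin N → ℝ, ∑ ξ : Fin N → Bool, G1 N F x c'' (σ ξ)
      = ∑ ξ : Fin N → Bool, G1 N F x c'' ξ := fun c'' => Equiv.sum_comp σ _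
  have h2 : ∑ ξ : Fin N → Bool, (G1 N F x c ξ + G1 N F x c (σ ξ)) ≤
      ∑ ξ : Fin N → Bool, (G1 N F x c' ξ + G1 N F x c' (σ ξ)) :=
    Finset.sum_le_sum fun ξ _ => point ξ
  rw [Finset.sum_add_distrib, Finset.sum_add_distrib, hsum c, hsum c'] at h2
  linarith

lemma induct (N : ℕ) (F : Set (Ω → ℝ)) (x : Fin N → Ω) (hF : F.Nonempty) {K : ℝ}
    (hK : ∀ h ∈ F, ∀ i, |h (x i)| ≤ K) (B : ℝ) (s : Finset (Fin N)) :
    ∀ c : Fin N → ℝ, (∀ i, |c i| ≤ B) → (∀ i ∉ s, c i = B) →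
      ∑ ξ : Fin N → Bool, G1 N F x c ξ ≤ ∑ ξ : Fin N → Bool, G1 N F x (fun _ => B) ξ := by
  induction s using Finset.induction_on with
  | empty =>
    intro c h1 h2
    have : c = fun _ => B := funext fun i => h2 i (Finset.notMem_empty i)
    rw [this]
  | @insert j s hj ih =>
    intro c h1 h2
    have hBnn : 0 ≤ B := le_trans (abs_nonneg _) (h1 j)
    have hc1 : ∀ i, |Function.update c j B i| ≤ B := by
      intro i
      by_cases hij : i = j
      · subst hij; rw [Function.update_self, abs_of_nonneg hBnn]
      · rw [Function.update_of_ne hij]; exact h1 i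
    have hc2 : ∀ i ∉ s, Function.update c j B i = B := by
      intro i hi
      by_cases hij : i = j
      · subst hij; exact Function.update_self _ _ _
      · rw [Function.update_of_ne hij]
        exact h2 i (by simp [Finset.mem_insert, hij, hi])
    exact le_trans (step N F x hF hK c j B (h1 j)) (ih (Function.update c j B) hc1 hc2)

end EmpRadAux

theorem empRad_mul_le
    {Ω : Type*} (N : ℕ) (F : Set (Ω → ℝ)) (x : Fin N → Ω)
    (hF : F.Nonempty)
    (hbddF : ∀ ξ : Fin N → Bool, BddAbove ((fun h : Ω → ℝ =>
      (N : ℝ)⁻¹ * ∑ i, (if ξ i then (1 : ℝ) else -1) * h (x i)) '' F))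
    (f : Ω → ℝ)
    (hbddfF : ∀ ξ : Fin N → Bool, BddAbove ((fun h : Ω → ℝ =>
      (N : ℝ)⁻¹ * ∑ i, (if ξ i then (1 : ℝ) else -1) * (f (x i) * h (x i))) '' F))
    (B : ℝ) (hB : ∀ i, |f (x i)| ≤ B) :
    empRad N ((fun h : Ω → ℝ => fun y => f y * h y) '' F) x ≤ B * empRad N F x := by
  by_cases hN : N = 0
  · subst hN
    have hzero : ∀ (G : Set (Ω → ℝ)), G.Nonempty → empRad 0 G x = 0 := by
      intro G hG
      unfold empRad
      have : (fun h : Ω → ℝ =>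
          ((0 : ℕ) : ℝ)⁻¹ * ∑ i : Fin 0, (if (default : Fin 0 → Bool) i then (1:ℝ) else -1) * h (x i)) = fun _ => 0 := by
        funext h; simp
      simp only [Finset.univ_unique]
      rw [Finset.sum_singleton]
      have himg : ∀ ξ : Fin 0 → Bool, ((fun h : Ω → ℝ =>
          ((0:ℕ) : ℝ)⁻¹ * ∑ i : Fin 0, (if ξ i then (1:ℝ) else -1) * h (x i)) '' G) = {0} := by
        intro ξ
        have : (fun h : Ω → ℝ =>
            ((0:ℕ) : ℝ)⁻¹ * ∑ i : Fin 0, (if ξ i then (1:ℝ) else -1) * h (x i)) = fun _ => 0 := by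
          funext h; simp
        rw [this]
        exact hG.image_const 0
      rw [himg]
      simp
    rw [hzero _ (hF.image _), hzero F hF, mul_zero]
  · have hB0 : 0 ≤ B := le_trans (abs_nonneg _) (hB ⟨0, Nat.pos_of_ne_zero hN⟩)
    obtain ⟨K, hK⟩ := EmpRadAux.exists_K hN hbddF
    have hLHS : empRad N ((fun h : Ω → ℝ => fun y => f y * h y) '' F) x
        = (2 ^ N : ℝ)⁻¹ * ∑ ξ : Fin N → Bool, EmpRadAux.G1 N F x (fun i => f (x i)) ξ := by
      unfold empRad EmpRadAux.G1
      congr 1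
      refine Finset.sum_congr rfl fun ξ _ => ?_
      rw [Set.image_image]
    have hRHS : B * empRad N F x
        = (2 ^ N : ℝ)⁻¹ * ∑ ξ : Fin N → Bool, EmpRadAux.G1 N F x (fun _ => B) ξ := by
      unfold empRad EmpRadAux.G1
      rw [← mul_assoc, mul_comm B, mul_assoc, Finset.mul_sum]
      congr 1
      refine Finset.sum_congr rfl fun ξ _ => ?_
      rw [show B * sSup ((fun h : Ω → ℝ =>
          (N : ℝ)⁻¹ * ∑ i, (if ξ i then (1:ℝ) else -1) * h (x i)) '' F)
        = sSup (B • ((fun h : Ω → ℝ =>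
          (N : ℝ)⁻¹ * ∑ i, (if ξ i then (1:ℝ) else -1) * h (x i)) '' F)) from
          (Real.sSup_smul_of_nonneg hB0 _).symm]
      congr 1
      rw [show B • ((fun h : Ω → ℝ =>
          (N : ℝ)⁻¹ * ∑ i, (if ξ i then (1:ℝ) else -1) * h (x i)) '' F)
        = (fun y : ℝ => B * y) '' ((fun h : Ω → ℝ =>
          (N : ℝ)⁻¹ * ∑ i, (if ξ i then (1:ℝ) else -1) * h (x i)) '' F) from rfl,
        Set.image_image]
      apply congrFun (congrArg _ _)
      funext h
      rw [show (∑ i, (if ξ i then (1:ℝ) else -1) * (B * h (x i)))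
          = ∑ i, B * ((if ξ i then (1:ℝ) else -1) * h (x i)) from
          Finset.sum_congr rfl fun i _ => by ring, ← Finset.mul_sum]
      ring
    rw [hLHS, hRHS]
    apply mul_le_mul_of_nonneg_left _ (by positivity)
    exact EmpRadAux.induct N F x hF hK B Finset.univ (fun i => f (x i))
      (fun i => hB i) (fun i hi => absurd (Finset.mem_univ i) hi)
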